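/- For every n ≥ 3 there exist Toeplitz matrices A B : Matrix (Fin n) (Fin n) ℍ such that A * B = B * A but A * B is not Toeplitz. (For instance, A with a (n-1) = a (1-n) = 1 and 0 elsewhere, and B with b (n-1) = b (1-n) = Quaternion.imK ('k') and 0 elsewhere, work.) -/

import Mathlib

/-- An `n × n` matrix over the real quaternions is Toeplitz if its entries are
constant along diagonals. -/
def IsToeplitz {n : ℕ} (A : Matrix (Fin n) (Fin n) (Quaternion ℝ)) : Prop :=
  ∀ r s r' s' : Fin n, (r : ℤ) - (s : ℤ) = (r' : ℤ) - (s' : ℤ) → A r s = A r' s'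

theorem exists_commuting_toeplitz_product_not_toeplitz (n : ℕ) (hn : 3 ≤ n) :
    ∃ A B : Matrix (Fin n) (Fin n) (Quaternion ℝ),
      IsToeplitz A ∧ IsToeplitz B ∧ A * B = B * A ∧ ¬ IsToeplitz (A * B) := by
  have hn0 : 0 < n := by omega
  set z : Fin n := ⟨0, by omega⟩ with hz
  set m : Fin n := ⟨n - 1, by omega⟩ with hm
  set o : Fin n := ⟨1, by omega⟩ with ho
  have hzv : (z : ℕ) = 0 := rfl
  have hmv : (m : ℕ) = n - 1 := rfl
  have hov : (o : ℕ) = 1 := rfl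
  have hzm : z ≠ m := by simp only [ne_eq, Fin.ext_iff]; omega
  have hmz : m ≠ z := by simp only [ne_eq, Fin.ext_iff]; omega
  set kq : Quaternion ℝ := ⟨0, 0, 0, 1⟩ with hkq
  set A : Matrix (Fin n) (Fin n) (Quaternion ℝ) :=
      Matrix.single z m 1 + Matrix.single m z 1 with hA
  set B : Matrix (Fin n) (Fin n) (Quaternion ℝ) :=
      Matrix.single z m kq + Matrix.single m z kq with hB
  have key : ∀ (c : Quaternion ℝ) (r s : Fin n),
      (Matrix.single z m c + Matrix.single m z c) r s =
        if ((r : ℤ) - (s : ℤ) = -((n : ℤ) - 1) ∨ (r : ℤ) - (s : ℤ) = (n : ℤ) - 1)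
        then c else 0 := by
    intro c r s
    have hr := r.isLt
    have hs := s.isLt
    by_cases h1 : r = z ∧ s = m
    · obtain ⟨rfl, rfl⟩ := h1
      rw [if_pos (Or.inl (by omega)), Matrix.add_apply,
        Matrix.single_apply_same,
        Matrix.single_apply_of_row_ne hmz, add_zero]
    · by_cases h2 : r = m ∧ s = z
      · obtain ⟨rfl, rfl⟩ := h2
        rw [if_pos (Or.inr (by omega)), Matrix.add_apply,
          Matrix.single_apply_same,
          Matrix.single_apply_of_row_ne hzm, zero_add]
      · rw [Matrix.add_apply,
          Matrix.single_apply_of_ne z m c r s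
            (fun h => h1 ⟨h.1.symm, h.2.symm⟩),
          Matrix.single_apply_of_ne m z c r s
            (fun h => h2 ⟨h.1.symm, h.2.symm⟩), add_zero, if_neg]
        rintro (h | h)
        · exact h1 ⟨by rw [Fin.ext_iff]; omega, by rw [Fin.ext_iff]; omega⟩
        · exact h2 ⟨by rw [Fin.ext_iff]; omega, by rw [Fin.ext_iff]; omega⟩
  have toep : ∀ c : Quaternion ℝ,
      IsToeplitz (Matrix.single z m c + Matrix.single m z c) := by
    intro c r s r' s' h
    rw [key, key, h]
  have hAB : A * B = Matrix.single z z kq + Matrix.single m m kq := by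
    rw [hA, hB, Matrix.add_mul, Matrix.mul_add, Matrix.mul_add,
      Matrix.single_mul_single_of_ne 1 z m z hmz kq,
      Matrix.single_mul_single_of_ne 1 m z m hzm kq,
      Matrix.single_mul_single_same, Matrix.single_mul_single_same,
      zero_add, add_zero, one_mul]
  have hBA : B * A = Matrix.single z z kq + Matrix.single m m kq := by
    rw [hA, hB, Matrix.add_mul, Matrix.mul_add, Matrix.mul_add,
      Matrix.single_mul_single_of_ne kq z m z hmz 1,
      Matrix.single_mul_single_of_ne kq m z m hzm 1,
      Matrix.single_mul_single_same, Matrix.single_mul_single_same,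
      zero_add, add_zero, mul_one]
  refine ⟨A, B, toep 1, toep kq, hAB.trans hBA.symm, ?_⟩
  intro h
  have hzo : z ≠ o := by simp only [ne_eq, Fin.ext_iff]; omega
  have hmo : m ≠ o := by simp only [ne_eq, Fin.ext_iff]; omega
  have h0 := h z z o o (by omega)
  rw [hAB, Matrix.add_apply, Matrix.single_apply_same,
    Matrix.single_apply_of_row_ne hmz, add_zero,
    Matrix.add_apply, Matrix.single_apply_of_row_ne hzo,
    Matrix.single_apply_of_row_ne hmo, add_zero] at h0
  have h1 : kq.imK = (0 : Quaternion ℝ).imK := congrArg QuaternionAlgebra.imK h0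
  rw [hkq] at h1
  simp [Quaternion.ext_iff, Quaternion.imK_zero] at h1
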